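/- Let G be the graph product of a finite simple graph Γ = (V,E) with finite vertex groups (G_v)_{v∈V}, and let A, B ⊆ V each span a complete subgraph of Γ. Then [G(A ∩ B)] is the greatest lower bound of [G(A)] and [G(B)] in the partial order ⪯ on conjugacy classes of finite subgroups of G: [G(A∩B)] ⪯ [G(A)], [G(A∩B)] ⪯ [G(B)], and every conjugacy class [F] of a finite subgroup with [F] ⪯ [G(A)] and [F] ⪯ [G(B)] satisfies [F] ⪯ [G(A∩B)]. -/

import Mathlib

open Monoid

/-- The set of commutator relators defining a graph product. -/
def graphProdRels {V : Type*} (Γ : SimpleGraph V) (G : V → Type*) [∀ v, Group (G v)] :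
    Set (CoprodI G) :=
  {x | ∃ (u v : V) (_ : Γ.Adj u v) (g : G u) (h : G v),
    x = (CoprodI.of g)⁻¹ * (CoprodI.of h)⁻¹ * CoprodI.of g * CoprodI.of h}

/-- The graph product of the graph of groups `(Γ, G)`: the quotient of the free product of the
vertex groups by the normal closure of the commutators of elements of pairs of adjacent vertex
groups. -/
def GraphProduct {V : Type*} (Γ : SimpleGraph V) (G : V → Type*) [∀ v, Group (G v)] : Type _ :=
  CoprodI G ⧸ Subgroup.normalClosure (graphProdRels Γ G)

instance {V : Type*} (Γ : SimpleGraph V) (G : V → Type*) [∀ v, Group (G v)] :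
    Group (GraphProduct Γ G) :=
  QuotientGroup.Quotient.group _

/-- The canonical map from a vertex group into the graph product. -/
def GraphProduct.of {V : Type*} (Γ : SimpleGraph V) (G : V → Type*) [∀ v, Group (G v)] (v : V) :
    G v →* GraphProduct Γ G :=
  (QuotientGroup.mk' _).comp CoprodI.of

/-- `G(A)`: the subgroup of the graph product generated by the images of the vertex groups
`G_a`, `a ∈ A`. -/
def GraphProduct.vsub {V : Type*} (Γ : SimpleGraph V) (G : V → Type*) [∀ v, Group (G v)]
    (A : Set V) : Subgroup (GraphProduct Γ G) :=
  ⨆ a ∈ A, (GraphProduct.of Γ G a).range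

/-- `[A] ⪯ [B]`: there is `g` with `A ⊆ g B g⁻¹`.  This relation on subgroups only depends on
the conjugacy classes of `A` and `B`, so it expresses the relation `⪯` on conjugacy classes of
subgroups via representatives. -/
def ConjClassLE {H : Type*} [Group H] (A B : Subgroup H) : Prop :=
  ∃ g : H, A ≤ B.map (MulAut.conj g).toMonoidHom

section Aux
open scoped Classical
variable {V : Type*} (Γ : SimpleGraph V) (G : V → Type*) [∀ v, Group (G v)]

theorem GraphProduct.of_commute {u v : V} (h : Γ.Adj u v) (g : G u) (k : G v) :
    Commute (GraphProduct.of Γ G u g) (GraphProduct.of Γ G v k) := by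
  have hmem : ((CoprodI.of g)⁻¹ * (CoprodI.of k)⁻¹ * CoprodI.of g * CoprodI.of k) ∈
      Subgroup.normalClosure (graphProdRels Γ G) :=
    Subgroup.subset_normalClosure ⟨u, v, h, g, k, rfl⟩
  have h1 : (QuotientGroup.mk' (Subgroup.normalClosure (graphProdRels Γ G)))
      ((CoprodI.of g)⁻¹ * (CoprodI.of k)⁻¹ * CoprodI.of g * CoprodI.of k) = 1 := by
    rwa [QuotientGroup.mk'_apply, QuotientGroup.eq_one_iff]
  have h2 : (GraphProduct.of Γ G u g)⁻¹ * (GraphProduct.of Γ G v k)⁻¹ *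
      GraphProduct.of Γ G u g * GraphProduct.of Γ G v k = 1 := by
    rw [map_mul, map_mul, map_mul, map_inv, map_inv] at h1
    exact h1
  rw [commute_iff_eq]
  calc GraphProduct.of Γ G u g * GraphProduct.of Γ G v k
      = (GraphProduct.of Γ G v k * GraphProduct.of Γ G u g) *
        ((GraphProduct.of Γ G u g)⁻¹ * (GraphProduct.of Γ G v k)⁻¹ *
          GraphProduct.of Γ G u g * GraphProduct.of Γ G v k) := by group
    _ = GraphProduct.of Γ G v k * GraphProduct.of Γ G u g := by rw [h2, mul_one]

noncomputable def GraphProduct.pi (S : Set V) : GraphProduct Γ G →* GraphProduct Γ G :=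
  QuotientGroup.lift _
    (CoprodI.lift (fun v => if v ∈ S then (GraphProduct.of Γ G v) else 1))
    (by
      refine Subgroup.normalClosure_le_normal ?_
      rintro x ⟨u, v, huv, g, k, rfl⟩
      simp only [SetLike.mem_coe, MonoidHom.mem_ker, map_mul, map_inv, CoprodI.lift_of]
      by_cases hu : u ∈ S <;> by_cases hv : v ∈ S <;> simp only [hu, hv, if_true, if_false,
        MonoidHom.one_apply, one_mul, mul_one, inv_one, inv_mul_cancel, mul_inv_cancel]
      have hc := (GraphProduct.of_commute Γ G huv g k).eq
      calc (GraphProduct.of Γ G u g)⁻¹ * (GraphProduct.of Γ G v k)⁻¹ * GraphProduct.of Γ G u g *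
          GraphProduct.of Γ G v k
          = (GraphProduct.of Γ G v k * GraphProduct.of Γ G u g)⁻¹ *
            (GraphProduct.of Γ G u g * GraphProduct.of Γ G v k) := by group
        _ = 1 := by rw [hc]; group)

theorem GraphProduct.pi_of {S : Set V} (v : V) (g : G v) :
    GraphProduct.pi Γ G S (GraphProduct.of Γ G v g) =
      if v ∈ S then GraphProduct.of Γ G v g else 1 := by
  show QuotientGroup.lift _ _ _ (QuotientGroup.mk (CoprodI.of g)) = _
  rw [QuotientGroup.lift_mk, CoprodI.lift_of]
  split <;> rfl

theorem GraphProduct.mem_vsub_of {A : Set V} {a : V} (ha : a ∈ A) (g : G a) :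
    GraphProduct.of Γ G a g ∈ GraphProduct.vsub Γ G A := by
  have hle : (GraphProduct.of Γ G a).range ≤ GraphProduct.vsub Γ G A :=
    le_iSup₂ (f := fun a (_ : a ∈ A) => (GraphProduct.of Γ G a).range) a ha
  exact hle (MonoidHom.mem_range.mpr ⟨g, rfl⟩)

theorem GraphProduct.pi_fix {A : Set V} {x : GraphProduct Γ G}
    (hx : x ∈ GraphProduct.vsub Γ G A) : GraphProduct.pi Γ G A x = x := by
  have : GraphProduct.vsub Γ G A ≤ (GraphProduct.pi Γ G A).eqLocus (MonoidHom.id _) := by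
    refine iSup₂_le fun a ha => ?_
    rintro _ ⟨g, rfl⟩
    show GraphProduct.pi Γ G A (GraphProduct.of Γ G a g) = GraphProduct.of Γ G a g
    rw [GraphProduct.pi_of, if_pos ha]
  exact this hx

theorem GraphProduct.pi_mem_vsub {A B : Set V} {x : GraphProduct Γ G}
    (hx : x ∈ GraphProduct.vsub Γ G B) :
    GraphProduct.pi Γ G A x ∈ GraphProduct.vsub Γ G (A ∩ B) := by
  have : GraphProduct.vsub Γ G B ≤
      (GraphProduct.vsub Γ G (A ∩ B)).comap (GraphProduct.pi Γ G A) := by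
    refine iSup₂_le fun b hb => ?_
    rintro _ ⟨g, rfl⟩
    simp only [Subgroup.mem_comap, GraphProduct.pi_of]
    by_cases hba : b ∈ A
    · rw [if_pos hba]
      exact GraphProduct.mem_vsub_of Γ G (Set.mem_inter hba hb) g
    · rw [if_neg hba]
      exact one_mem _
  exact this hx

theorem GraphProduct.vsub_mono {A B : Set V} (h : A ⊆ B) :
    GraphProduct.vsub Γ G A ≤ GraphProduct.vsub Γ G B :=
  iSup₂_le fun a ha => le_iSup₂ (f := fun a (_ : a ∈ B) => (GraphProduct.of Γ G a).range) a (h ha)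

end Aux

/-- For complete `A, B ⊆ V`, the conjugacy class of `G(A ∩ B)` is the greatest
lower bound of those of `G(A)` and `G(B)` in the order `⪯` on conjugacy classes of finite
subgroups of `G`. -/
theorem graphProduct_conjClass_glb {V : Type*} [Fintype V] (Γ : SimpleGraph V)
    (G : V → Type*) [∀ v, Group (G v)] [∀ v, Finite (G v)] (A B : Set V)
    (hA : A.Pairwise Γ.Adj) (hB : B.Pairwise Γ.Adj) :
    ConjClassLE (GraphProduct.vsub Γ G (A ∩ B)) (GraphProduct.vsub Γ G A) ∧
    ConjClassLE (GraphProduct.vsub Γ G (A ∩ B)) (GraphProduct.vsub Γ G B) ∧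
    ∀ F : Subgroup (GraphProduct Γ G), Finite F →
      ConjClassLE F (GraphProduct.vsub Γ G A) → ConjClassLE F (GraphProduct.vsub Γ G B) →
      ConjClassLE F (GraphProduct.vsub Γ G (A ∩ B)) := by
  have triv : ∀ C D : Set V, C ⊆ D →
      ConjClassLE (GraphProduct.vsub Γ G C) (GraphProduct.vsub Γ G D) := by
    intro C D h
    refine ⟨1, fun x hx => ?_⟩
    exact ⟨x, GraphProduct.vsub_mono Γ G h hx, by simp⟩
  refine ⟨triv _ _ Set.inter_subset_left, triv _ _ Set.inter_subset_right, ?_⟩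
  rintro F _ ⟨g, hg⟩ ⟨h, hh⟩
  refine ⟨g * GraphProduct.pi Γ G A (g⁻¹ * h), fun x hx => ?_⟩
  obtain ⟨a, ha, rfl⟩ := hg hx
  obtain ⟨b, hb, hab⟩ := hh hx
  simp only [MulEquiv.coe_toMonoidHom, MulAut.conj_apply] at hab ⊢
  -- a = g⁻¹ * h * b * h⁻¹ * g
  have hab' : a = (g⁻¹ * h) * b * (g⁻¹ * h)⁻¹ := by
    calc a = g⁻¹ * (g * a * g⁻¹) * g := by group
      _ = g⁻¹ * (h * b * h⁻¹) * g := by rw [hab]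
      _ = (g⁻¹ * h) * b * (g⁻¹ * h)⁻¹ := by group
  set c := GraphProduct.pi Γ G A (g⁻¹ * h) with hc
  have key : a = c * GraphProduct.pi Γ G A b * c⁻¹ := by
    conv_lhs => rw [← GraphProduct.pi_fix Γ G ha, hab']
    simp [map_mul, map_inv, hc]
  refine ⟨GraphProduct.pi Γ G A b, GraphProduct.pi_mem_vsub Γ G hb, ?_⟩
  rw [show g * a * g⁻¹ = (g * c) * GraphProduct.pi Γ G A b * (g * c)⁻¹ by rw [key]; group]
  simp [MulAut.conj_apply, mul_assoc]
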